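/- Let Y be a convex algebra, X a subalgebra of Y, and X_* a one-point extension of X. Let z be an element of Pri(X_*) that is Y-cancellable, and suppose there exist w in Y and q in (0,1) with qz + (1-q)* = qz + (1-q)w. Then px + (1-p)* = px + (1-p)w for every x in Pri(X_*) and p in (0,1), and every element of Adh(X_*) adheres to w in Y. -/

import Mathlib

/-- A convex algebra presented via binary convex combinations (Stone axioms).
`comb p x y` stands for `p x + (1-p) y`. -/
structure ConvexAlg (X : Type*) where
  comb : ℝ → X → X → X
  idem : ∀ p ∈ Set.Ioo (0:ℝ) 1, ∀ x, comb p x x = x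
  comm : ∀ p ∈ Set.Ioo (0:ℝ) 1, ∀ x y, comb p x y = comb (1-p) y x
  assoc : ∀ p ∈ Set.Ioo (0:ℝ) 1, ∀ q ∈ Set.Ioo (0:ℝ) 1, ∀ x y z,
    comb p (comb q x y) z = comb (p*q) x (comb (p*(1-q)/(1-p*q)) y z)

/-- `x` adheres to `y` : `p x + (1-p) y = y` for all `p ∈ (0,1)`. -/
def ConvexAlg.Adh {X : Type*} (A : ConvexAlg X) (x y : X) : Prop :=
  ∀ p ∈ Set.Ioo (0:ℝ) 1, A.comb p x y = y

def ConvexAlg.Cancellable {Y : Type*} (B : ConvexAlg Y) (z : Y) : Prop :=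
  ∀ x y : Y, ∀ p ∈ Set.Ioo (0:ℝ) 1, B.comb p x z = B.comb p y z → x = y

private lemma ioo_one_sub {a : ℝ} (ha : a ∈ Set.Ioo (0:ℝ) 1) : 1 - a ∈ Set.Ioo (0:ℝ) 1 :=
  ⟨by linarith [ha.2], by linarith [ha.1]⟩

private lemma ioo_mul {a b : ℝ} (ha : a ∈ Set.Ioo (0:ℝ) 1) (hb : b ∈ Set.Ioo (0:ℝ) 1) :
    a * b ∈ Set.Ioo (0:ℝ) 1 :=
  ⟨mul_pos ha.1 hb.1, by nlinarith [ha.1, ha.2, hb.1, hb.2]⟩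

private lemma ioo_mix {a b : ℝ} (ha : a ∈ Set.Ioo (0:ℝ) 1) (hb : b ∈ Set.Ioo (0:ℝ) 1) :
    a + (1-a)*b ∈ Set.Ioo (0:ℝ) 1 :=
  ⟨by nlinarith [ha.1, ha.2, hb.1], by nlinarith [ha.1, ha.2, hb.2]⟩

private lemma ioo_div {a b : ℝ} (ha : 0 < a) (hab : a < b) (hb : b < 1) :
    a / b ∈ Set.Ioo (0:ℝ) 1 :=
  ⟨div_pos ha (lt_trans ha hab), (div_lt_one (lt_trans ha hab)).2 hab⟩

private lemma I2 {T : Type*} (A : ConvexAlg T) {p q : ℝ}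
    (hp : p ∈ Set.Ioo (0:ℝ) 1) (hq : q ∈ Set.Ioo (0:ℝ) 1) (x y : T) :
    A.comb p (A.comb q x y) y = A.comb (p*q) x y := by
  have hpq : (0:ℝ) < 1 - p*q := by nlinarith [hp.1, hp.2, hq.1, hq.2]
  have hr : p*(1-q)/(1-p*q) ∈ Set.Ioo (0:ℝ) 1 :=
    ⟨div_pos (mul_pos hp.1 (by linarith [hq.2])) hpq,
     (div_lt_one hpq).2 (by nlinarith [hp.2, hq.1, hq.2])⟩
  rw [A.assoc p hp q hq x y y, A.idem _ hr y]

private lemma I1 {T : Type*} (A : ConvexAlg T) {p q : ℝ}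
    (hp : p ∈ Set.Ioo (0:ℝ) 1) (hq : q ∈ Set.Ioo (0:ℝ) 1) (x y : T) :
    A.comb p x (A.comb q x y) = A.comb (p + (1-p)*q) x y := by
  rw [A.comm p hp x (A.comb q x y), A.comm q hq x y,
    I2 A (ioo_one_sub hp) (ioo_one_sub hq) y x,
    A.comm ((1-p)*(1-q)) (ioo_mul (ioo_one_sub hp) (ioo_one_sub hq)) y x]
  congr 1; ring

private lemma I3 {T : Type*} (A : ConvexAlg T) {p q : ℝ}
    (hp : p ∈ Set.Ioo (0:ℝ) 1) (hq : q ∈ Set.Ioo (0:ℝ) 1) (x y z : T) :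
    A.comb p x (A.comb q y z)
      = A.comb (p+(1-p)*q) (A.comb (p/(p+(1-p)*q)) x y) z := by
  have hs : p+(1-p)*q ∈ Set.Ioo (0:ℝ) 1 := ioo_mix hp hq
  have hps : p < p+(1-p)*q := by nlinarith [hp.2, hq.1]
  have ht : p/(p+(1-p)*q) ∈ Set.Ioo (0:ℝ) 1 := ioo_div hp.1 hps hs.2
  rw [A.assoc _ hs _ ht x y z]
  have hsne : p+(1-p)*q ≠ 0 := ne_of_gt hs.1
  have h1p : (1:ℝ) - p ≠ 0 := by have := hp.2; intro h; linarith
  have c1 : (p+(1-p)*q) * (p/(p+(1-p)*q)) = p := by field_simp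
  rw [c1]
  have c2 : (p+(1-p)*q)*(1-p/(p+(1-p)*q))/(1-p) = q := by
    field_simp; ring
  rw [c2]

/-- uniqueness lemma: let `B` be a convex algebra on `Y`, `X ⊆ Y` a
subalgebra, and `E` a one-point extension of the subalgebra on `X` (the new point
being `none`). If `z ∈ Pri(E)` is `Y`-cancellable and `q z + (1-q) * = q z + (1-q) w`
for some `w ∈ Y` and `q ∈ (0,1)`, then `p x + (1-p) * = p x + (1-p) w` for every
`x ∈ Pri(E)` and `p ∈ (0,1)`, and every element of `Adh(E)` adheres to `w` in `Y`. -/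
theorem uniqueness_lemma {Y : Type*} (B : ConvexAlg Y) (X : Set Y)
    (hX : ∀ p ∈ Set.Ioo (0:ℝ) 1, ∀ a ∈ X, ∀ b ∈ X, B.comb p a b ∈ X)
    (E : ConvexAlg (Option {y : Y // y ∈ X}))
    (hcomp : ∀ p, ∀ hp : p ∈ Set.Ioo (0:ℝ) 1, ∀ a b : {y : Y // y ∈ X},
      E.comb p (some a) (some b) = some ⟨B.comb p a b, hX p hp a a.2 b b.2⟩)
    (z : {y : Y // y ∈ X}) (hzPri : ¬ E.Adh (some z) none)
    (hzCan : B.Cancellable z.1)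
    (w : Y) (q : ℝ) (hq : q ∈ Set.Ioo (0:ℝ) 1)
    (hqw : ∃ v : {y : Y // y ∈ X},
      E.comb q (some z) none = some v ∧ (v : Y) = B.comb q z.1 w) :
    (∀ x : {y : Y // y ∈ X}, ¬ E.Adh (some x) none →
      ∀ p ∈ Set.Ioo (0:ℝ) 1, ∃ v : {y : Y // y ∈ X},
        E.comb p (some x) none = some v ∧ (v : Y) = B.comb p x.1 w) ∧
    (∀ x : {y : Y // y ∈ X}, E.Adh (some x) none → B.Adh x.1 w) := by
  classical
  obtain ⟨v, hv1, hv2⟩ := hqw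
  have hhalf : (1/2 : ℝ) ∈ Set.Ioo (0:ℝ) 1 := by norm_num
  -- "none" propagates to all coefficients
  have hdown : ∀ x : {y : Y // y ∈ X}, ∀ p ∈ Set.Ioo (0:ℝ) 1,
      E.comb p (some x) none = none →
      ∀ s ∈ Set.Ioo (0:ℝ) 1, E.comb s (some x) none = none := by
    intro x p hp h0 s hs
    have h1p : (1:ℝ) - p ∈ Set.Ioo 0 1 := ioo_one_sub hp
    have horb : ∀ n : ℕ, E.comb (1 - (1-p)^(n+1)) (some x) none = none := by
      intro n
      induction n with
      | zero => simpa using h0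
      | succ n ih =>
        have htn : (1 - (1-p)^(n+1)) ∈ Set.Ioo (0:ℝ) 1 := by
          constructor
          · have : (1-p)^(n+1) < 1 := pow_lt_one₀ (le_of_lt h1p.1) h1p.2 (Nat.succ_ne_zero n)
            linarith
          · have : (0:ℝ) < (1-p)^(n+1) := pow_pos h1p.1 _
            linarith
        have key : E.comb (p + (1-p)*(1 - (1-p)^(n+1))) (some x) none = none := by
          rw [← I1 E hp htn, ih, h0]
        have hc : 1 - (1-p)^(n+1+1) = p + (1-p)*(1 - (1-p)^(n+1)) := by ring
        rw [hc]; exact key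
    obtain ⟨n, hn⟩ := exists_pow_lt_of_lt_one
      (show (0:ℝ) < 1 - s by linarith [hs.2]) (show 1-p < 1 by linarith [hp.1])
    have hmono : (1-p)^(n+1) < 1 - s := by
      calc (1-p)^(n+1) = (1-p)^n * (1-p) := pow_succ _ _
        _ ≤ (1-p)^n := by nlinarith [pow_pos h1p.1 n, h1p.2]
        _ < 1 - s := hn
    set t := 1 - (1-p)^(n+1) with htdef
    have hst : s < t := by simp only [htdef]; linarith
    have ht : t ∈ Set.Ioo (0:ℝ) 1 := by
      constructor
      · linarith [hs.1]
      · have : (0:ℝ) < (1-p)^(n+1) := pow_pos h1p.1 _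
        simp only [htdef]; linarith
    have hsdiv : s/t ∈ Set.Ioo (0:ℝ) 1 := ioo_div hs.1 hst ht.2
    have key : E.comb ((s/t)*t) (some x) none = none := by
      rw [← I2 E hsdiv ht, horb n, E.idem _ hsdiv]
    rwa [div_mul_cancel₀ s (ne_of_gt (lt_trans hs.1 hst))] at key
  -- z is never sent to none
  have hznn : ∀ s ∈ Set.Ioo (0:ℝ) 1, E.comb s (some z) none ≠ none := by
    intro s hs h
    have := hdown z s hs h q hq
    rw [hv1] at this
    exact Option.some_ne_none v this
  -- value of f_z above q
  have hup : ∀ t ∈ Set.Ioo (0:ℝ) 1, q < t → ∃ u : {y : Y // y ∈ X},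
      E.comb t (some z) none = some u ∧ (u : Y) = B.comb t z.1 w := by
    intro t ht hqt
    have ha : (t-q)/(1-q) ∈ Set.Ioo (0:ℝ) 1 :=
      ioo_div (by linarith) (by linarith [ht.2]) (by linarith [hq.1])
    set a := (t-q)/(1-q) with hadef
    have h1q : (1:ℝ) - q ≠ 0 := by have := hq.2; intro h; linarith
    have hcoef : a + (1-a)*q = t := by
      simp only [hadef]; field_simp; ring
    have e := I1 E ha hq (some z) none
    rw [hv1, hcomp a ha z v, hcoef] at e
    refine ⟨⟨B.comb a z.1 v, hX a ha z.1 z.2 v v.2⟩, e.symm, ?_⟩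
    show B.comb a z.1 v = B.comb t z.1 w
    rw [hv2, I1 B ha hq, hcoef]
  -- star-z : the value of f_z everywhere
  have hstar : ∀ η ∈ Set.Ioo (0:ℝ) 1, ∃ u : {y : Y // y ∈ X},
      E.comb η (some z) none = some u ∧ (u : Y) = B.comb η z.1 w := by
    intro η hη
    obtain ⟨u, hu⟩ := Option.ne_none_iff_exists'.mp (hznn η hη)
    refine ⟨u, hu, ?_⟩
    have ha : (1+q)/2 ∈ Set.Ioo (0:ℝ) 1 := ⟨by linarith [hq.1], by linarith [hq.2]⟩
    set a := (1+q)/2 with hadef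
    have hqa : q < a := by simp only [hadef]; linarith [hq.2]
    have ht : a + (1-a)*η ∈ Set.Ioo (0:ℝ) 1 := ioo_mix ha hη
    have hqt : q < a + (1-a)*η := by nlinarith [ha.2, hη.1]
    obtain ⟨u', hu'1, hu'2⟩ := hup _ ht hqt
    have e := I1 E ha hη (some z) none
    rw [hu, hcomp a ha z u, hu'1] at e
    have ev : B.comb a z.1 u.1 = (u' : Y) :=
      congrArg Subtype.val (Option.some_injective _ e)
    rw [hu'2, ← I1 B ha hη] at ev
    have ev2 : B.comb (1-a) (u:Y) z.1 = B.comb (1-a) (B.comb η z.1 w) z.1 := by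
      rw [← B.comm a ha z.1 (u:Y), ← B.comm a ha z.1 (B.comb η z.1 w)]
      exact ev
    exact hzCan _ _ (1-a) (ioo_one_sub ha) ev2
  -- the key rearrangement equation in E, at c = 1/2
  have heeq : ∀ ε ∈ Set.Ioo (0:ℝ) 1, ∀ x : {y : Y // y ∈ X},
      E.comb (1/2) (some z) (E.comb ε (some x) none)
        = E.comb (ε/2) (some x) (E.comb (1/(2-ε)) (some z) none) := by
    intro ε hε x
    have h1ε : (0:ℝ) < 1 + ε := by linarith [hε.1]
    have h1ε' : (1:ℝ) + ε ≠ 0 := ne_of_gt h1ε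
    have h2ε : (0:ℝ) < 2 - ε := by linarith [hε.2]
    have h2ε' : (2:ℝ) - ε ≠ 0 := ne_of_gt h2ε
    set γ := (1+ε)/2 with hγdef
    set δ := 1/(1+ε) with hδdef
    have hγ : γ ∈ Set.Ioo (0:ℝ) 1 := ⟨by simp only [hγdef]; linarith,
      by simp only [hγdef]; linarith [hε.2]⟩
    have hδ : δ ∈ Set.Ioo (0:ℝ) 1 := ⟨by simp only [hδdef]; positivity,
      by simp only [hδdef]; rw [div_lt_one h1ε]; linarith [hε.1]⟩
    have key := E.assoc γ hγ δ hδ (some z) (some x) none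
    rw [E.comm δ hδ (some z) (some x)] at key
    have key2 := E.assoc γ hγ (1-δ) (ioo_one_sub hδ) (some x) (some z) none
    have c1 : γ*δ = 1/2 := by
      simp only [hγdef, hδdef]; field_simp
    have c3 : γ*(1-δ) = ε/2 := by
      simp only [hγdef, hδdef]; field_simp; ring
    have c2 : γ*(1-δ)/(1-γ*δ) = ε := by
      rw [c3, c1]; ring
    have c4 : γ*(1-(1-δ))/(1-γ*(1-δ)) = 1/(2-ε) := by
      have e0 : γ*(1-(1-δ)) = γ*δ := by ring
      rw [e0, c1, c3]
      rw [div_eq_div_iff (by intro h; apply h2ε'; linarith : (1:ℝ)-ε/2 ≠ 0) h2ε']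
      ring
    rw [c2, c1] at key
    rw [c4, c3] at key2
    exact key.symm.trans key2
  -- values are always the right convex combination with w
  have hval : ∀ x : {y : Y // y ∈ X}, ∀ ε ∈ Set.Ioo (0:ℝ) 1, ∀ u : {y : Y // y ∈ X},
      E.comb ε (some x) none = some u → (u : Y) = B.comb ε x.1 w := by
    intro x ε hε u hu
    have h1ε : (0:ℝ) < 1 + ε := by linarith [hε.1]
    have h1ε' : (1:ℝ) + ε ≠ 0 := ne_of_gt h1ε
    have h2ε : (0:ℝ) < 2 - ε := by linarith [hε.2]
    have h2ε' : (2:ℝ) - ε ≠ 0 := ne_of_gt h2ε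
    have hη : 1/(2-ε) ∈ Set.Ioo (0:ℝ) 1 :=
      ⟨by positivity, by rw [div_lt_one h2ε]; linarith [hε.2]⟩
    have hπ : ε/2 ∈ Set.Ioo (0:ℝ) 1 := ⟨by linarith [hε.1], by linarith [hε.2]⟩
    obtain ⟨u₂, hu₂1, hu₂2⟩ := hstar _ hη
    have e := heeq ε hε x
    rw [hu, hu₂1, hcomp (1/2) hhalf z u, hcomp (ε/2) hπ x u₂] at e
    have ev : B.comb (1/2) z.1 u.1 = B.comb (ε/2) x.1 u₂.1 :=
      congrArg Subtype.val (Option.some_injective _ e)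
    rw [hu₂2] at ev
    -- rearrange RHS to comb (1/2) z (comb ε x w)
    have rhs : B.comb (ε/2) x.1 (B.comb (1/(2-ε)) z.1 w)
        = B.comb (1/2) z.1 (B.comb ε x.1 w) := by
      rw [I3 B hπ hη x.1 z.1 w]
      have c5 : ε/2 + (1-ε/2)*(1/(2-ε)) = (1+ε)/2 := by
        field_simp; ring
      have c6 : (ε/2)/(ε/2 + (1-ε/2)*(1/(2-ε))) = ε/(1+ε) := by
        rw [c5, div_eq_div_iff (by intro h; apply h1ε'; linarith : ((1:ℝ)+ε)/2 ≠ 0) h1ε']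
        ring
      rw [c6, c5]
      have hεδ : ε/(1+ε) ∈ Set.Ioo (0:ℝ) 1 :=
        ⟨div_pos hε.1 h1ε, by rw [div_lt_one h1ε]; linarith [hε.1]⟩
      rw [B.comm (ε/(1+ε)) hεδ x.1 z.1]
      have c7 : 1 - ε/(1+ε) = 1/(1+ε) := by field_simp; ring
      rw [c7]
      have hγ : (1+ε)/2 ∈ Set.Ioo (0:ℝ) 1 := ⟨by linarith, by linarith [hε.2]⟩
      have hδ : 1/(1+ε) ∈ Set.Ioo (0:ℝ) 1 :=
        ⟨by positivity, by rw [div_lt_one h1ε]; linarith [hε.1]⟩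
      rw [B.assoc ((1+ε)/2) hγ (1/(1+ε)) hδ z.1 x.1 w]
      have c8 : (1+ε)/2 * (1/(1+ε)) = 1/2 := by field_simp
      have d0 : 1-(1+ε)/2*(1/(1+ε)) = 1/2 := by rw [c8]; norm_num
      have c9 : (1+ε)/2*(1-1/(1+ε))/(1-(1+ε)/2*(1/(1+ε))) = ε := by
        rw [d0, div_eq_iff (by norm_num : (1:ℝ)/2 ≠ 0)]
        field_simp
        ring
      rw [c9, c8]
    rw [rhs] at ev
    have hcm : ∀ a b : Y, B.comb (1/2) a b = B.comb (1/2) b a := by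
      intro a b
      have := B.comm (1/2) hhalf a b
      rwa [show (1:ℝ)-1/2 = 1/2 by norm_num] at this
    have ev2 : B.comb (1/2) (u:Y) z.1 = B.comb (1/2) (B.comb ε x.1 w) z.1 := by
      rw [hcm (u:Y) z.1, hcm (B.comb ε x.1 w) z.1]
      exact ev
    exact hzCan _ _ (1/2) hhalf ev2
  -- adherent elements adhere to w
  have hadh : ∀ x : {y : Y // y ∈ X}, E.Adh (some x) none → B.Adh x.1 w := by
    intro x hA θ hθ
    have h2θ : (0:ℝ) < 2 - θ := by linarith [hθ.2]
    have h2θ' : (2:ℝ) - θ ≠ 0 := ne_of_gt h2θ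
    have hη : 1/(2-θ) ∈ Set.Ioo (0:ℝ) 1 :=
      ⟨by positivity, by rw [div_lt_one h2θ]; linarith [hθ.2]⟩
    have hπ : θ/2 ∈ Set.Ioo (0:ℝ) 1 := ⟨by linarith [hθ.1], by linarith [hθ.2]⟩
    obtain ⟨u₁, h11, h12⟩ := hstar (1/2) hhalf
    obtain ⟨u₂, h21, h22⟩ := hstar (1/(2-θ)) hη
    have e := heeq θ hθ x
    rw [hA θ hθ, h11, h21, hcomp (θ/2) hπ x u₂] at e
    have ev : (u₁ : Y) = B.comb (θ/2) x.1 u₂.1 :=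
      congrArg Subtype.val (Option.some_injective _ e)
    rw [h12, h22] at ev
    -- ev : comb (1/2) z w = comb (θ/2) x (comb (1/(2-θ)) z w)
    have h1π : 1 - θ/2 ∈ Set.Ioo (0:ℝ) 1 := ioo_one_sub hπ
    have lhs2 : B.comb (1/2) z.1 w = B.comb (θ/2) w (B.comb (1/(2-θ)) z.1 w) := by
      rw [B.comm (θ/2) hπ w (B.comb (1/(2-θ)) z.1 w), I2 B h1π hη z.1 w]
      congr 1
      field_simp
      try ring
    rw [lhs2] at ev
    rw [B.comm (1/(2-θ)) hη z.1 w] at ev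
    have h1η : 1 - 1/(2-θ) ∈ Set.Ioo (0:ℝ) 1 := ioo_one_sub hη
    rw [I1 B hπ h1η w z.1, I3 B hπ h1η x.1 w z.1] at ev
    have d1 : θ/2+(1-θ/2)*(1-1/(2-θ)) = 1/2 := by field_simp; ring
    have d2 : (θ/2)/(θ/2+(1-θ/2)*(1-1/(2-θ))) = θ := by rw [d1]; try ring
    rw [d2, d1] at ev
    exact (hzCan w (B.comb θ x.1 w) (1/2) hhalf ev).symm
  refine ⟨?_, hadh⟩
  intro x hxPri p hp
  have hxne : ∃ p₀, p₀ ∈ Set.Ioo (0:ℝ) 1 ∧ E.comb p₀ (some x) none ≠ none := by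
    by_contra hcon
    push_neg at hcon
    exact hxPri (fun r hr => hcon r hr)
  obtain ⟨p₀, hp₀, hne⟩ := hxne
  have hnn : E.comb p (some x) none ≠ none := fun h => hne (hdown x p hp h p₀ hp₀)
  obtain ⟨u, hu⟩ := Option.ne_none_iff_exists'.mp hnn
  exact ⟨u, hu, hval x p hp u hu⟩
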